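/- Let A be a finite alphabet with at least 2 letters and let (c_n)_{n≥0} be a sequence over A such that, for some C ∈ ℕ, (c_n) contains no C+1 consecutive equal letters (bounded weak partial coefficients). Let τ_n = σ_{c_n} be the corresponding Arnoux–Rauzy substitutions and τ_{0,n} = τ_0 ∘ τ_1 ∘ ⋯ ∘ τ_{n−1}. Then there exists M > 0 such that |τ_{0,n}(a)| ≤ M·|τ_{0,n}(b)| for all n ≥ 1 and all a, b ∈ A. -/
import Mathlib


open scoped Classical

section Core

variable {A : Type*} {B : Type*}

/-- `w` occurs at position `i` of the infinite word `x`. -/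
def OccursAt (x : ℕ → A) (w : List A) (i : ℕ) : Prop :=
  w = (List.range w.length).map fun j => x (i + j)

/-- `w` is a factor of the infinite word `x`. -/
def IsFactor (x : ℕ → A) (w : List A) : Prop := ∃ i, OccursAt x w i

/-- The number of (possibly overlapping) occurrences of `w` in the finite word `u`,
i.e. `|u|_w`. -/
noncomputable def countOccs (u w : List A) : ℕ :=
  ((Finset.range (u.length + 1)).filter fun i => w <+: u.drop i).card

/-- The finite word `w` is `C`-balanced in the infinite word `x`. -/
def BalancedIn (C : ℝ) (w : List A) (x : ℕ → A) : Prop :=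
  ∀ u v : List A, IsFactor x u → IsFactor x v → u.length = v.length →
    |(countOccs u w : ℝ) - (countOccs v w : ℝ)| ≤ C

/-- Every finite word is `C_w`-balanced in `x` for some constant `C_w > 0`. -/
def FactorBalanced (x : ℕ → A) : Prop :=
  ∀ w : List A, ∃ C : ℝ, 0 < C ∧ BalancedIn C w x

/-- There is a single constant `C > 0` such that every finite word is `C`-balanced in `x`. -/
def UniformlyFactorBalanced (x : ℕ → A) : Prop :=
  ∃ C : ℝ, 0 < C ∧ ∀ w : List A, BalancedIn C w x

/-- Every letter is `C`-balanced in `x`. -/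
def LetterBalanced (C : ℝ) (x : ℕ → A) : Prop :=
  ∀ a : A, BalancedIn C [a] x

/-- `x` is `P`-power-free: no factor of `x` is a `P`-th power of a nonempty word. -/
def PowerFree (P : ℕ) (x : ℕ → A) : Prop :=
  ∀ v : List A, v ≠ [] → ¬ IsFactor x (List.flatten (List.replicate P v))

/-- The length-`n` prefix of the infinite word `x`. -/
def wordPrefix (x : ℕ → A) (n : ℕ) : List A := (List.range n).map x

/-- The extension of a substitution to finite words. -/
def substWord (τ : A → List B) (w : List A) : List B := (w.map τ).flatten

/-- The word `w` has (prefix) frequency `μ` in `x`. -/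
def HasFreq (x : ℕ → A) (w : List A) (μ : ℝ) : Prop :=
  Filter.Tendsto (fun n => (countOccs (wordPrefix x n) w : ℝ) / n)
    Filter.atTop (nhds μ)

/-- `τ` is `k`-decisive in `x` with witness map `r` (each `r a` of length `k ≥ 1`,
and `τ b` starts with `r a` whenever `ab` is a factor of `x`). -/
def DecisiveWith (τ : A → List B) (x : ℕ → A) (r : A → List B) (k : ℕ) : Prop :=
  1 ≤ k ∧ (∀ a, (r a).length = k) ∧
    ∀ a b : A, IsFactor x [a, b] → r a <+: τ b

/-- `τ` is `k`-decisive in `x`. -/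
def Decisive (τ : A → List B) (x : ℕ → A) (k : ℕ) : Prop :=
  ∃ r : A → List B, DecisiveWith τ x r k

/-- The image of the infinite word `x` under the substitution `τ`: when the images of
prefixes of `x` have unbounded length, `substInf τ x` is the infinite word `τ(x)`. -/
noncomputable def substInf [Nonempty B] (τ : A → List B) (x : ℕ → A) (j : ℕ) : B :=
  if h : ∃ n, j < (substWord τ (wordPrefix x n)).length
  then (substWord τ (wordPrefix x (Nat.find h))).get ⟨j, Nat.find_spec h⟩
  else Classical.arbitrary B

/-- Iterates of a substitution: `substIter τ n a = τ^n(a)` as a finite word. -/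
def substIter (τ : A → List A) : ℕ → A → List A
  | 0, a => [a]
  | n+1, a => substWord (substIter τ n) (τ a)

/-- `τ` is prolongable on the letter `a`. -/
def Prolongable (τ : A → List A) (a : A) : Prop :=
  (τ a).head? = some a ∧ (∀ b, τ b ≠ []) ∧
    Filter.Tendsto (fun n => (substIter τ n a).length) Filter.atTop Filter.atTop

/-- The fixed point `τ^ω(a)` of a substitution prolongable on `a`:
the limit of the prefix chain `τ^n(a)`. -/
noncomputable def fixedPoint (τ : A → List A) (a : A) (j : ℕ) : A :=
  if h : ∃ n, j < (substIter τ n a).length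
  then (substIter τ (Nat.find h) a).get ⟨j, Nat.find_spec h⟩
  else a

/-- The factor complexity of `x`: the number of distinct length-`n` factors. -/
noncomputable def complexity (x : ℕ → A) (n : ℕ) : ℕ :=
  Set.ncard {w : List A | w.length = n ∧ IsFactor x w}

/-- Every factor of `x` occurs infinitely often in `x`. -/
def Recurrent (x : ℕ → A) : Prop :=
  ∀ w : List A, IsFactor x w → ∀ N : ℕ, ∃ i, N ≤ i ∧ OccursAt x w i

/-- For every factor `w` of `x` there is `k` such that `w` occurs in
every length-`k` factor of `x`. -/
def UniformlyRecurrent (x : ℕ → A) : Prop :=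
  ∀ w : List A, IsFactor x w → ∃ k : ℕ, ∀ v : List A, IsFactor x v →
    v.length = k → 1 ≤ countOccs v w

end Core

section ArnouxRauzy

variable {A : Type*}

/-- The Arnoux–Rauzy substitution `σ_a`: it maps `a` to `a` and any `b ≠ a` to `ba`. -/
def arSubst [DecidableEq A] (a b : A) : List A := if b = a then [a] else [b, a]

/-- `arIter c n = σ_{c 0} ∘ σ_{c 1} ∘ ⋯ ∘ σ_{c (n-1)}` (identity for `n = 0`). -/
def arIter [DecidableEq A] (c : ℕ → A) : ℕ → A → List A
  | 0, b => [b]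
  | n+1, b => substWord (arIter c n) (arSubst (c n) b)

/-- The Arnoux–Rauzy word associated with the directive sequence `c` and letter `a`:
the limit of the prefix chain `σ_{c 0} ∘ ⋯ ∘ σ_{c n}(a)`. -/
noncomputable def arLimit [DecidableEq A] (c : ℕ → A) (a : A) (j : ℕ) : A :=
  if h : ∃ n, j < (arIter c n a).length
  then (arIter c (Nat.find h) a).get ⟨j, Nat.find_spec h⟩
  else a

end ArnouxRauzy

section Aux

variable {A : Type*} [DecidableEq A] (c : ℕ → A)

lemma ar_len_succ (n : ℕ) (b : A) :
    (arIter c (n+1) b).length =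
      if b = c n then (arIter c n (c n)).length
      else (arIter c n b).length + (arIter c n (c n)).length := by
  show (substWord (arIter c n) (arSubst (c n) b)).length = _
  unfold substWord arSubst
  by_cases h : b = c n <;> simp [h]

lemma ar_len_pos (n : ℕ) (b : A) : 1 ≤ (arIter c n b).length := by
  induction n generalizing b with
  | zero => simp [arIter]
  | succ n ih =>
    rw [ar_len_succ]
    split
    · exact ih _
    · exact le_trans (ih b) (Nat.le_add_right _ _)

end Aux

/-- Lemma: for a sequence of Arnoux–Rauzy substitutions with bounded weak partial
quotients, the ratios `|τ_{0,n}(a)| / |τ_{0,n}(b)|` are uniformly bounded. -/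
theorem stmt16 {A : Type*} [Fintype A] [DecidableEq A] (hcard : 2 ≤ Fintype.card A)
    (c : ℕ → A) (C : ℕ) (hC : ∀ n : ℕ, ¬ (∀ j : ℕ, j ≤ C → c (n + j) = c n)) :
    ∃ M : ℝ, 0 < M ∧ ∀ n : ℕ, 1 ≤ n → ∀ a b : A,
      ((arIter c n a).length : ℝ) ≤ M * ((arIter c n b).length : ℝ) := by
  classical
  set L : ℕ → A → ℕ := fun n b => (arIter c n b).length with hLdef
  set s : ℕ → ℕ := fun n => L n (c n) with hsdef
  have hpos : ∀ n b, 1 ≤ L n b := fun n b => ar_len_pos c n b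
  have hsucc : ∀ n b, L (n+1) b = if b = c n then s n else L n b + s n :=
    fun n b => ar_len_succ c n b
  have hge : ∀ n b, s n ≤ L (n+1) b := by
    intro n b
    rw [hsucc n b]
    split
    · exact le_rfl
    · exact Nat.le_add_left _ _
  have hmono : Monotone s := monotone_nat_of_le_succ (fun n => hge n (c (n+1)))
  set T : ℕ → ℕ := fun n => ∑ t ∈ Finset.range n, s t with hTdef
  have hupper : ∀ n b, L n b ≤ 1 + T n := by
    intro n
    induction n with
    | zero => intro b; simp [hLdef, hTdef, arIter]
    | succ n ih =>
      intro b
      have h1 : L (n+1) b ≤ L n b + s n := by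
        rw [hsucc n b]; split
        · exact Nat.le_add_left _ _
        · exact le_rfl
      have h2 : T (n+1) = T n + s n := Finset.sum_range_succ s n
      calc L (n+1) b ≤ L n b + s n := h1
        _ ≤ (1 + T n) + s n := by exact Nat.add_le_add_right (ih b) _
        _ = 1 + T (n+1) := by rw [h2]; ring
  -- existence of a "change" close by
  have hC' : ∀ n, ∃ j, j ≤ C ∧ c (n + j) ≠ c n := by
    intro n
    have := hC n
    push_neg at this
    exact this
  -- doubling of s every C+2 steps
  have hdouble : ∀ t, 2 * s t ≤ s (t + (C + 2)) := by
    intro t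
    obtain hP := hC' (t+1)
    set j0 := Nat.find hP with hj0def
    have hspec : j0 ≤ C ∧ c (t + 1 + j0) ≠ c (t + 1) := Nat.find_spec hP
    have hj0pos : j0 ≠ 0 := by
      intro h
      apply hspec.2
      rw [h]
    obtain ⟨k, hk⟩ := Nat.exists_eq_succ_of_ne_zero hj0pos
    have hprev : c (t + 1 + k) = c (t + 1) := by
      by_contra h
      exact Nat.find_min hP (by omega) ⟨by omega, h⟩
    have hchg : c (t + 1 + k + 1) ≠ c (t + 1 + k) := by
      rw [hprev]
      have h2 := hspec.2
      rwa [hk, show t + 1 + (k + 1) = t + 1 + k + 1 by ring] at h2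
    -- at the change step u = t + 1 + k
    have hstep : s (t + 1 + k + 1) = L (t + 1 + k) (c (t + 1 + k + 1)) + s (t + 1 + k) := by
      have := hsucc (t + 1 + k) (c (t + 1 + k + 1))
      rw [if_neg hchg] at this
      exact this
    have hlow1 : s t ≤ L (t + 1 + k) (c (t + 1 + k + 1)) := by
      have h1 : s (t + k) ≤ L (t + k + 1) (c (t + 1 + k + 1)) := hge _ _
      have h2 : s t ≤ s (t + k) := hmono (Nat.le_add_right _ _)
      have h3 : t + k + 1 = t + 1 + k := by ring
      rw [h3] at h1
      exact le_trans h2 h1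
    have hlow2 : s t ≤ s (t + 1 + k) := hmono (by omega)
    have h4 : 2 * s t ≤ s (t + 1 + k + 1) := by omega
    have h5 : s (t + 1 + k + 1) ≤ s (t + (C + 2)) := by
      apply hmono
      have : k + 1 ≤ C := by omega
      omega
    exact le_trans h4 h5
  -- bound on the sum of s
  have hkey : ∀ n : ℕ, T (n+1) ≤ (2 * C + 4) * s n := by
    intro n
    induction n using Nat.strong_induction_on with
    | _ n ih =>
      rcases le_or_gt n (C + 1) with h | h
      · calc T (n+1) ≤ ∑ _t ∈ Finset.range (n+1), s n := by
              apply Finset.sum_le_sum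
              intro t ht
              exact hmono (Nat.le_of_lt_succ (Finset.mem_range.mp ht))
          _ = (n+1) * s n := by rw [Finset.sum_const, Finset.card_range, smul_eq_mul]
          _ ≤ (2 * C + 4) * s n := Nat.mul_le_mul_right _ (by omega)
      · obtain ⟨m, hm⟩ : ∃ m, n = m + (C + 2) := ⟨n - (C + 2), by omega⟩
        have hsplit : T (n+1) = T (m+1) + ∑ t ∈ Finset.Ico (m+1) (n+1), s t := by
          simp only [hTdef, Finset.range_eq_Ico]
          exact (Finset.sum_Ico_consecutive s (by omega) (by omega)).symm
        have hsum2 : ∑ t ∈ Finset.Ico (m+1) (n+1), s t ≤ (C + 2) * s n := by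
          calc ∑ t ∈ Finset.Ico (m+1) (n+1), s t ≤ ∑ _t ∈ Finset.Ico (m+1) (n+1), s n := by
                apply Finset.sum_le_sum
                intro t ht
                exact hmono (Nat.le_of_lt_succ (Finset.mem_Ico.mp ht).2)
            _ = (C + 2) * s n := by
                rw [Finset.sum_const, Nat.card_Ico, smul_eq_mul]
                congr 1
                omega
        have hih : T (m+1) ≤ (2 * C + 4) * s m := ih m (by omega)
        have hdm : 2 * s m ≤ s n := by
          have := hdouble m
          rwa [← hm] at this
        calc T (n+1) = T (m+1) + ∑ t ∈ Finset.Ico (m+1) (n+1), s t := hsplit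
          _ ≤ (2 * C + 4) * s m + (C + 2) * s n := Nat.add_le_add hih hsum2
          _ = (C + 2) * (2 * s m) + (C + 2) * s n := by ring
          _ ≤ (C + 2) * s n + (C + 2) * s n := by
              exact Nat.add_le_add_right (Nat.mul_le_mul_left _ hdm) _
          _ = (2 * C + 4) * s n := by ring
  -- conclusion
  refine ⟨((2 * C + 5 : ℕ) : ℝ), by exact_mod_cast (by omega : 0 < 2 * C + 5), ?_⟩
  intro n hn a b
  obtain ⟨k, rfl⟩ : ∃ k, n = k + 1 := ⟨n - 1, by omega⟩
  have hnat : L (k+1) a ≤ (2 * C + 5) * L (k+1) b := by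
    have h1 : L (k+1) a ≤ 1 + T (k+1) := hupper (k+1) a
    have h2 : T (k+1) ≤ (2 * C + 4) * s k := hkey k
    have h3 : 1 ≤ s k := hpos k (c k)
    have h4 : s k ≤ L (k+1) b := hge k b
    have h5 : L (k+1) a ≤ (2 * C + 5) * s k := by
      calc L (k+1) a ≤ 1 + (2 * C + 4) * s k := by omega
        _ ≤ s k + (2 * C + 4) * s k := by omega
        _ = (2 * C + 5) * s k := by ring
    calc L (k+1) a ≤ (2 * C + 5) * s k := h5
      _ ≤ (2 * C + 5) * L (k+1) b := Nat.mul_le_mul_left _ h4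
  exact_mod_cast hnat
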